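/- Let u be a reduced word with u ≈ u_1·ũ, where ũ is the final segment of u (the commuting subword of all ends of u). Then the non-splitting reduct of u·u⁻¹ is [u·u⁻¹] ≈ u_1·ũ·u_1⁻¹, where u⁻¹ reverses the order of the letters of u. -/

import Mathlib

variable {V : Type*} [DecidableEq V] [Fintype V]

/-- A letter is a nonempty connected subset of the graph `G`
(connectedness of the induced subgraph includes nonemptiness). -/
def IsLetter (G : SimpleGraph V) (s : Finset V) : Prop :=
  (G.induce (↑s : Set V)).Connected

/-- The type of letters of `G`. -/
def Letter (G : SimpleGraph V) := {s : Finset V // IsLetter G s}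

/-- A word is a finite sequence of letters. -/
abbrev Word (G : SimpleGraph V) := List (Letter G)

/-- Two letters commute iff their union is not a letter (is disconnected). -/
def LCommute (G : SimpleGraph V) (s t : Letter G) : Prop :=
  ¬ IsLetter G (s.1 ∪ t.1)

/-- Two words commute if their letters pairwise commute. -/
def WCommute (G : SimpleGraph V) (u v : Word G) : Prop :=
  ∀ s ∈ u, ∀ t ∈ v, LCommute G s t

/-- One swap of two adjacent commuting letters. -/
def LSwapStep (G : SimpleGraph V) (w w' : Word G) : Prop :=
  ∃ (a b : Word G) (s t : Letter G), LCommute G s t ∧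
    w = a ++ s :: t :: b ∧ w' = a ++ t :: s :: b

/-- Equivalence (`≈`) of words: sequences of swaps of adjacent commuting letters. -/
def WEquiv (G : SimpleGraph V) : Word G → Word G → Prop :=
  Relation.ReflTransGen (LSwapStep G)

/-- A word is reduced if there is no pair of comparable letters such that the
smaller one commutes with all letters strictly in between. -/
def WIsReduced (G : SimpleGraph V) (w : Word G) : Prop :=
  ¬ ∃ (a b c : Word G) (s t : Letter G),
      w = a ++ s :: (b ++ t :: c) ∧
      ((s.1 ⊆ t.1 ∧ ∀ r ∈ b, LCommute G s r) ∨
       (t.1 ⊆ s.1 ∧ ∀ r ∈ b, LCommute G t r))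

/-- A splitting of a letter `s`: a (possibly empty) word whose letters are
proper subsets of `s`. -/
def IsSplitting (G : SimpleGraph V) (x : Word G) (s : Letter G) : Prop :=
  ∀ t ∈ x, t.1 ⊂ s.1

/-- `SplitStep G u v`: `u` is obtained from `v` by replacing one occurrence of a
letter by a splitting of it. -/
def SplitStep (G : SimpleGraph V) (u v : Word G) : Prop :=
  ∃ (a b x : Word G) (s : Letter G),
    v = a ++ s :: b ∧ IsSplitting G x s ∧ u = a ++ x ++ b

/-- One step of the splitting order up to equivalence. -/
def PrecStep (G : SimpleGraph V) (u v : Word G) : Prop :=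
  ∃ u' v', WEquiv G v v' ∧ SplitStep G u' v' ∧ WEquiv G u u'

/-- The splitting order `≺` on words. -/
def WPrec (G : SimpleGraph V) : Word G → Word G → Prop :=
  Relation.TransGen (PrecStep G)

/-- `u ≼ v` : `u ≺ v` or `u ≈ v`. -/
def WPreceq (G : SimpleGraph V) (u v : Word G) : Prop :=
  WPrec G u v ∨ WEquiv G u v

/-- Absorption: if `s ⊆ t`, replace a subword `s·t` (or `t·s`) by `t`. -/
def AbsorbStep (G : SimpleGraph V) (w w' : Word G) : Prop :=
  ∃ (a b : Word G) (s t : Letter G), s.1 ⊆ t.1 ∧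
    (w = a ++ s :: t :: b ∨ w = a ++ t :: s :: b) ∧ w' = a ++ t :: b

/-- A non-splitting reduction step: Commutation or Absorption. -/
def NSStep (G : SimpleGraph V) (w w' : Word G) : Prop :=
  LSwapStep G w w' ∨ AbsorbStep G w w'

/-- `NSRed G u v`: `v` is a non-splitting reduction of `u`, i.e. a reduced word
obtained from `u` by Commutation and Absorption steps only. -/
def NSRed (G : SimpleGraph V) (u v : Word G) : Prop :=
  Relation.ReflTransGen (NSStep G) u v ∧ WIsReduced G v

/-- The letter `t` is left-absorbed by the word `w`: `t` is contained in some
letter of `w` and commutes with all earlier letters. -/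
def LetterLeftAbsorbed (G : SimpleGraph V) (t : Letter G) (w : Word G) : Prop :=
  ∃ (a b : Word G) (s : Letter G), w = a ++ s :: b ∧ t.1 ⊆ s.1 ∧ ∀ r ∈ a, LCommute G t r

/-- The letter `t` is right-absorbed by the word `w`. -/
def LetterRightAbsorbed (G : SimpleGraph V) (t : Letter G) (w : Word G) : Prop :=
  ∃ (a b : Word G) (s : Letter G), w = a ++ s :: b ∧ t.1 ⊆ s.1 ∧ ∀ r ∈ b, LCommute G t r

/-- The letter `t` is properly left-absorbed by the word `w`. -/
def LetterProperLeftAbsorbed (G : SimpleGraph V) (t : Letter G) (w : Word G) : Prop :=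
  ∃ (a b : Word G) (s : Letter G), w = a ++ s :: b ∧ t.1 ⊂ s.1 ∧ ∀ r ∈ a, LCommute G t r

/-- The letter `t` is properly right-absorbed by the word `w`. -/
def LetterProperRightAbsorbed (G : SimpleGraph V) (t : Letter G) (w : Word G) : Prop :=
  ∃ (a b : Word G) (s : Letter G), w = a ++ s :: b ∧ t.1 ⊂ s.1 ∧ ∀ r ∈ b, LCommute G t r

/-- A word `u` is left-absorbed by `w` if each of its letters is. -/
def LeftAbsorbed (G : SimpleGraph V) (u w : Word G) : Prop :=
  ∀ t ∈ u, LetterLeftAbsorbed G t w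

/-- A word `u` is right-absorbed by `w` if each of its letters is. -/
def RightAbsorbed (G : SimpleGraph V) (u w : Word G) : Prop :=
  ∀ t ∈ u, LetterRightAbsorbed G t w

/-- A word `u` is properly left-absorbed by `w` if each of its letters is. -/
def ProperLeftAbsorbed (G : SimpleGraph V) (u w : Word G) : Prop :=
  ∀ t ∈ u, LetterProperLeftAbsorbed G t w

/-- A word `u` is properly right-absorbed by `w` if each of its letters is. -/
def ProperRightAbsorbed (G : SimpleGraph V) (u w : Word G) : Prop :=
  ∀ t ∈ u, LetterProperRightAbsorbed G t w

/-- A commuting word: its letters pairwise commute. -/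
def IsCommuting (G : SimpleGraph V) (u : Word G) : Prop :=
  List.Pairwise (LCommute G) u

/-- The letter `s` is an end of the word `u` if `u ≈ v·s` for some `v`. -/
def IsEnd (G : SimpleGraph V) (s : Letter G) (u : Word G) : Prop :=
  ∃ v, WEquiv G u (v ++ [s])

/-- `t` is the final segment of `u`: the commuting word consisting of all ends of `u`. -/
def IsFinalSegment (G : SimpleGraph V) (t u : Word G) : Prop :=
  IsCommuting G t ∧ ∀ s, s ∈ t ↔ IsEnd G s u

set_option linter.unusedSectionVars false

section Helpers

variable {G : SimpleGraph V}

theorem LCommute.symm' {s t : Letter G} (h : LCommute G s t) : LCommute G t s := by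
  intro hl
  exact h (by rwa [Finset.union_comm] at hl)

theorem dep_of_subset {s t : Letter G} (h : s.1 ⊆ t.1) : ¬ LCommute G s t := by
  intro hc
  apply hc
  unfold IsLetter
  rw [Finset.union_eq_right.mpr h]
  exact t.2

theorem lcommute_irrefl (s : Letter G) : ¬ LCommute G s s :=
  dep_of_subset (subset_refl _)

theorem letter_nonempty (s : Letter G) : s.1.Nonempty := by
  obtain ⟨⟨v, hv⟩⟩ := s.2.nonempty
  exact ⟨v, by exact_mod_cast hv⟩

theorem depMono {s t y : Letter G} (hsub : s.1 ⊆ t.1) (h : LCommute G y t) :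
    LCommute G y s := by
  intro hc
  apply h
  unfold IsLetter at *
  have hset : (↑(y.1 ∪ t.1) : Set V) = ↑(y.1 ∪ s.1) ∪ ↑t.1 := by
    ext v
    simp only [Finset.coe_union, Set.mem_union, Finset.mem_coe]
    constructor
    · rintro (h1 | h1)
      · exact Or.inl (Or.inl h1)
      · exact Or.inr h1
    · rintro ((h1 | h1) | h1)
      · exact Or.inl h1
      · exact Or.inr (hsub h1)
      · exact Or.inr h1
  rw [hset]
  obtain ⟨v, hv⟩ := letter_nonempty s
  refine SimpleGraph.induce_union_connected hc.preconnected (SimpleGraph.Connected.preconnected t.2) ⟨v, ?_, ?_⟩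
  · simp only [Finset.coe_union, Set.mem_union, Finset.mem_coe]
    exact Or.inr hv
  · simpa using hsub hv

theorem LSwapStep.symm {w w' : Word G} (h : LSwapStep G w w') : LSwapStep G w' w := by
  obtain ⟨a, b, s, t, hc, rfl, rfl⟩ := h
  exact ⟨a, b, t, s, hc.symm', rfl, rfl⟩

theorem WEquiv.refl (w : Word G) : WEquiv G w w := Relation.ReflTransGen.refl

theorem WEquiv.trans {a b c : Word G} (h1 : WEquiv G a b) (h2 : WEquiv G b c) :
    WEquiv G a c := Relation.ReflTransGen.trans h1 h2

theorem WEquiv.symm {a b : Word G} (h : WEquiv G a b) : WEquiv G b a := by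
  induction h with
  | refl => exact WEquiv.refl _
  | tail _ h2 ih => exact Relation.ReflTransGen.trans (Relation.ReflTransGen.single h2.symm) ih

theorem weq_swap {s t : Letter G} (h : LCommute G s t) (P Q : Word G) :
    WEquiv G (P ++ s :: t :: Q) (P ++ t :: s :: Q) :=
  Relation.ReflTransGen.single ⟨P, Q, s, t, h, rfl, rfl⟩

theorem weq_append_left (X : Word G) {a b : Word G} (h : WEquiv G a b) :
    WEquiv G (X ++ a) (X ++ b) := by
  induction h with
  | refl => exact WEquiv.refl _
  | tail _ h2 ih =>
    obtain ⟨p, q, s, t, hc, rfl, rfl⟩ := h2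
    exact ih.tail ⟨X ++ p, q, s, t, hc, by simp, by simp⟩

theorem weq_append_right (Y : Word G) {a b : Word G} (h : WEquiv G a b) :
    WEquiv G (a ++ Y) (b ++ Y) := by
  induction h with
  | refl => exact WEquiv.refl _
  | tail _ h2 ih =>
    obtain ⟨p, q, s, t, hc, rfl, rfl⟩ := h2
    exact ih.tail ⟨p, q ++ Y, s, t, hc, by simp, by simp⟩

theorem weq_append {a a' b b' : Word G} (h1 : WEquiv G a a') (h2 : WEquiv G b b') :
    WEquiv G (a ++ b) (a' ++ b') :=
  (weq_append_right b h1).trans (weq_append_left a' h2)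

theorem weq_reverse {a b : Word G} (h : WEquiv G a b) :
    WEquiv G a.reverse b.reverse := by
  induction h with
  | refl => exact WEquiv.refl _
  | tail _ h2 ih =>
    obtain ⟨p, q, s, t, hc, rfl, rfl⟩ := h2
    exact ih.tail ⟨q.reverse, p.reverse, t, s, hc.symm', by simp, by simp⟩

theorem weq_move_out {x : Letter G} : ∀ {M : Word G}, (∀ y ∈ M, LCommute G x y) →
    WEquiv G (x :: M) (M ++ [x])
  | [], _ => WEquiv.refl _
  | y :: M, h => by
    have h1 : WEquiv G (x :: y :: M) (y :: x :: M) := weq_swap (h y (by simp)) [] M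
    exact h1.trans (weq_append_left [y] (weq_move_out (fun z hz => h z (by simp [hz]))))

theorem split_occ {α : Type*} : ∀ {x₁ : List α} {A x₂ R : List α} {s : α},
    x₁ ++ x₂ = A ++ s :: R →
    (∃ δ, x₁ = A ++ s :: δ ∧ R = δ ++ x₂) ∨ (∃ δ, A = x₁ ++ δ ∧ x₂ = δ ++ s :: R) := by
  intro x₁
  induction x₁ with
  | nil =>
    intro A x₂ R s h
    exact Or.inr ⟨A, rfl, h⟩
  | cons a x₁ ih =>
    intro A x₂ R s h
    cases A with
    | nil =>
      simp only [List.nil_append, List.cons_append] at h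
      obtain ⟨rfl, h2⟩ := List.cons.inj h
      exact Or.inl ⟨x₁, rfl, h2.symm⟩
    | cons b A =>
      rw [List.cons_append, List.cons_append] at h
      obtain ⟨rfl, h2⟩ := List.cons.inj h
      rcases ih h2 with ⟨δ, rfl, hR⟩ | ⟨δ, rfl, hx⟩
      · exact Or.inl ⟨δ, rfl, hR⟩
      · exact Or.inr ⟨δ, rfl, hx⟩

theorem split4 {α : Type*} {p q A R : List α} {x y s : α}
    (h : p ++ x :: y :: q = A ++ s :: R) :
    (∃ δ, p = A ++ s :: δ ∧ R = δ ++ x :: y :: q) ∨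
    (A = p ∧ s = x ∧ R = y :: q) ∨
    (A = p ++ [x] ∧ s = y ∧ R = q) ∨
    (∃ δ, A = p ++ x :: y :: δ ∧ q = δ ++ s :: R) := by
  rcases split_occ h with ⟨δ, h1, h2⟩ | ⟨δ, h1, h2⟩
  · exact Or.inl ⟨δ, h1, h2⟩
  · cases δ with
    | nil =>
      obtain ⟨rfl, h3⟩ := List.cons.inj h2
      exact Or.inr (Or.inl ⟨by simpa using h1, rfl, h3.symm⟩)
    | cons c δ =>
      rw [List.cons_append] at h2
      obtain ⟨rfl, h3⟩ := List.cons.inj h2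
      cases δ with
      | nil =>
        obtain ⟨rfl, h4⟩ := List.cons.inj h3
        exact Or.inr (Or.inr (Or.inl ⟨h1, rfl, h4.symm⟩))
      | cons d δ =>
        rw [List.cons_append] at h3
        obtain ⟨rfl, h4⟩ := List.cons.inj h3
        exact Or.inr (Or.inr (Or.inr ⟨δ, h1, h4⟩))

end Helpers
section Track

variable {G : SimpleGraph V}

theorem track {s t : Letter G} (hst : ¬ LCommute G s t) {a b w2 : Word G}
    (h : WEquiv G (a ++ s :: t :: b) w2) :
    ∃ A M B, w2 = A ++ s :: (M ++ t :: B) ∧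
      (∀ y ∈ M, LCommute G s y ∨ LCommute G t y) ∧
      WEquiv G (a ++ t :: b) (A ++ (M ++ t :: B)) := by
  induction h with
  | refl => exact ⟨a, [], b, rfl, by simp, WEquiv.refl _⟩
  | tail _ h2 ih =>
    obtain ⟨A, M, B, hA, hM, hdel⟩ := ih
    obtain ⟨p, q, x, y, hxy, heq, rfl⟩ := h2
    have hsplit : p ++ x :: y :: q = A ++ s :: (M ++ t :: B) := heq.symm.trans hA
    rcases split4 hsplit with ⟨δ, rfl, hR⟩ | ⟨rfl, rfl, hR⟩ | ⟨rfl, rfl, rfl⟩ | ⟨δ, rfl, rfl⟩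
    · -- the tracked s lies in p
      rcases split4 hR.symm with ⟨ε, rfl, rfl⟩ | ⟨rfl, rfl, rfl⟩ | ⟨h1, h2, h3⟩ | ⟨ε, h1, rfl⟩
      · -- t in the prefix δ ; swap happens inside B
        refine ⟨A, M, ε ++ y :: x :: q, by simp, hM, ?_⟩
        refine hdel.trans ?_
        have := weq_swap hxy (A ++ (M ++ t :: ε)) q
        simpa using this
      · -- t = x : swap moves t right
        refine ⟨A, M ++ [y], q, by simp, ?_, ?_⟩
        · intro z hz
          rcases List.mem_append.mp hz with h1 | h1
          · exact hM z h1
          · simp only [List.mem_singleton] at h1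
            subst h1; exact Or.inr hxy
        · refine hdel.trans ?_
          have := weq_swap hxy (A ++ M) q
          simpa using this
      · -- t = y : swap moves t left; M loses its last element x
        rw [← h2] at hxy
        subst h3
        refine ⟨A, δ, x :: B, by simp [← h2], fun z hz => hM z (by simp [h1, hz]), ?_⟩
        rw [h1] at hdel
        refine hdel.trans ?_
        have := weq_swap hxy (A ++ δ) B
        simpa using this
      · -- swap inside M
        subst h1
        refine ⟨A, δ ++ y :: x :: ε, B, by simp, ?_, ?_⟩
        · intro z hz
          apply hM
          simp only [List.mem_append, List.mem_cons] at hz ⊢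
          tauto
        · refine hdel.trans ?_
          have := weq_swap hxy (A ++ δ) (ε ++ t :: B)
          simpa using this
    · -- s = x : swap moves s right
      cases M with
      | nil =>
        rw [List.nil_append] at hR
        obtain ⟨h3, h4⟩ := List.cons.inj hR
        exact absurd (by rw [h3]; exact hxy) hst
      | cons z M₁ =>
        rw [List.cons_append] at hR
        obtain ⟨h3, h4⟩ := List.cons.inj hR
        subst h3; subst h4
        refine ⟨A ++ [z], M₁, B, by simp, fun w hw => hM w (by simp [hw]), ?_⟩
        simpa using hdel
    · -- s = y : swap moves s left
      refine ⟨p, x :: M, B, by simp, ?_, ?_⟩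
      · intro z hz
        rcases List.mem_cons.mp hz with h1 | h1
        · subst h1; exact Or.inl hxy.symm'
        · exact hM z h1
      · simpa using hdel
    · -- swap inside A
      refine ⟨p ++ y :: x :: δ, M, B, by simp, hM, ?_⟩
      refine hdel.trans ?_
      have := weq_swap hxy p (δ ++ (M ++ t :: B))
      simpa using this

end Track
section MoreTrack

variable {G : SimpleGraph V}

theorem track' {s t : Letter G} (hst : ¬ LCommute G s t) {a b w2 : Word G}
    (h : WEquiv G (a ++ t :: s :: b) w2) :
    ∃ A M B, w2 = A ++ t :: (M ++ s :: B) ∧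
      (∀ y ∈ M, LCommute G s y ∨ LCommute G t y) ∧
      WEquiv G (a ++ t :: b) (A ++ t :: (M ++ B)) := by
  have h2 := weq_reverse h
  have h3 : WEquiv G (b.reverse ++ s :: t :: a.reverse) w2.reverse := by
    simpa using h2
  obtain ⟨A0, M0, B0, hE, hM0, hdel0⟩ := track hst h3
  refine ⟨B0.reverse, M0.reverse, A0.reverse, ?_, ?_, ?_⟩
  · have := congrArg List.reverse hE
    simpa using this
  · intro y hy
    exact hM0 y (by simpa using hy)
  · have := weq_reverse hdel0
    simpa using this

theorem last_track {v w2 : Word G} {x : Letter G} (h : WEquiv G (v ++ [x]) w2) :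
    ∃ p q, w2 = p ++ x :: q ∧ (∀ y ∈ q, LCommute G x y) ∧ WEquiv G v (p ++ q) := by
  induction h with
  | refl => exact ⟨v, [], rfl, by simp, by simpa using WEquiv.refl (G := G) v⟩
  | tail _ h2 ih =>
    obtain ⟨P, Q, hE, hQ, hdel⟩ := ih
    obtain ⟨p, q, a, b, hab, heq, rfl⟩ := h2
    have hsplit : p ++ a :: b :: q = P ++ x :: Q := heq.symm.trans hE
    rcases split4 hsplit with ⟨δ, rfl, rfl⟩ | ⟨rfl, rfl, rfl⟩ | ⟨rfl, rfl, rfl⟩ | ⟨δ, rfl, rfl⟩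
    · -- x in p ; swap inside Q
      refine ⟨P, δ ++ b :: a :: q, by simp, ?_, ?_⟩
      · intro z hz
        apply hQ
        simp only [List.mem_append, List.mem_cons] at hz ⊢
        tauto
      · refine hdel.trans ?_
        have := weq_swap hab (P ++ δ) q
        simpa using this
    · -- x = a
      refine ⟨P ++ [b], q, by simp, fun z hz => hQ z (by simp [hz]), ?_⟩
      simpa using hdel
    · -- x = b
      refine ⟨p, a :: Q, by simp, ?_, ?_⟩
      · intro z hz
        rcases List.mem_cons.mp hz with h1 | h1
        · subst h1; exact hab.symm'
        · exact hQ z h1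
      · simpa using hdel
    · -- swap inside P
      refine ⟨p ++ b :: a :: δ, Q, by simp, hQ, ?_⟩
      refine hdel.trans ?_
      have := weq_swap hab p (δ ++ Q)
      simpa using this

theorem comm_before {c p q : Word G} {x : Letter G} (hc : IsCommuting G c)
    (h : c = p ++ x :: q) :
    (∀ y ∈ p, LCommute G x y) ∧ (∀ y ∈ q, LCommute G x y) := by
  subst h
  rw [IsCommuting, List.pairwise_append] at hc
  obtain ⟨h1, h2, h3⟩ := hc
  rw [List.pairwise_cons] at h2
  exact ⟨fun y hy => (h3 y hy x (by simp)).symm', h2.1⟩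

theorem viol1 {u α β γ : Word G} {S T : Letter G} (hu : WIsReduced G u)
    (hv : WEquiv G u (α ++ S :: (β ++ T :: γ))) (hsub : S.1 ⊆ T.1)
    (hβ : ∀ y ∈ β, LCommute G S y) : False := by
  have h1 : WEquiv G (α ++ S :: (β ++ T :: γ)) ((α ++ β) ++ S :: T :: γ) := by
    have := weq_append_left α (weq_append_right (T :: γ) (weq_move_out hβ))
    simpa [List.append_assoc] using this
  have h2 : WEquiv G ((α ++ β) ++ S :: T :: γ) u := (hv.trans h1).symm
  obtain ⟨A, M, B, hE, hM, _⟩ := track (dep_of_subset hsub) h2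
  exact hu ⟨A, M, B, S, T, hE, Or.inl ⟨hsub, fun r hr =>
    (hM r hr).elim id (fun h => ((depMono hsub h.symm').symm'))⟩⟩

theorem viol2 {u α β γ : Word G} {S T : Letter G} (hu : WIsReduced G u)
    (hv : WEquiv G u (α ++ T :: (β ++ S :: γ))) (hsub : S.1 ⊆ T.1)
    (hβ : ∀ y ∈ β, LCommute G S y) : False := by
  have h1 : WEquiv G (α ++ T :: (β ++ S :: γ)) (α ++ T :: S :: (β ++ γ)) := by
    have := weq_append_left (α ++ [T]) (weq_append_right γ (weq_move_out hβ).symm)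
    simpa [List.append_assoc] using this
  have hTS : ¬ LCommute G T S := fun hc => dep_of_subset hsub hc.symm'
  obtain ⟨A, M, B, hE, hM, _⟩ := track hTS ((hv.trans h1).symm)
  exact hu ⟨A, M, B, T, S, hE, Or.inr ⟨hsub, fun r hr =>
    (hM r hr).elim (fun h => (depMono hsub h.symm').symm') id⟩⟩

theorem nodup_of_commuting {c : Word G} (hc : IsCommuting G c) : c.Nodup := by
  refine List.Pairwise.imp ?_ hc
  intro a b h he
  subst he
  exact lcommute_irrefl a h

theorem weq_of_perm_comm {c d : Word G} (h : c.Perm d) (hc : IsCommuting G c) :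
    WEquiv G c d := by
  induction h with
  | nil => exact WEquiv.refl _
  | cons x _ ih =>
    rename_i l₁ l₂ _
    exact weq_append_left [x] (ih (List.pairwise_cons.mp hc).2)
  | swap x y l =>
    have : LCommute G y x := (List.pairwise_cons.mp hc).1 x (by simp)
    exact weq_swap this [] l
  | trans p1 p2 ih1 ih2 =>
    exact (ih1 hc).trans (ih2 ((p1.pairwise_iff (fun h => h.symm')).mp hc))

theorem cancel_last {p q : Word G} {x : Letter G}
    (h : WEquiv G (p ++ [x]) (q ++ [x])) : WEquiv G p q := by
  obtain ⟨P, Q, hE, hQ, hdel⟩ := last_track h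
  rcases split_occ hE with ⟨δ, rfl, rfl⟩ | ⟨δ, rfl, h2⟩
  · exact absurd (hQ x (by simp)) (lcommute_irrefl x)
  · cases δ with
    | nil =>
      obtain ⟨-, h3⟩ := List.cons.inj h2
      rw [← h3] at hdel
      simpa using hdel
    | cons c δ =>
      rw [List.cons_append] at h2
      obtain ⟨rfl, h3⟩ := List.cons.inj h2
      simp at h3

theorem cancel_right : ∀ (c : Word G) {p q : Word G},
    WEquiv G (p ++ c) (q ++ c) → WEquiv G p q := by
  intro c
  induction c using List.reverseRecOn with
  | nil => intro p q h; simpa using h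
  | append_singleton c x ih =>
    intro p q h
    exact ih (cancel_last (x := x) (by simpa [List.append_assoc] using h))

end MoreTrack
section Absorb

variable {G : SimpleGraph V}

theorem absorb_preserve {u : Word G} (hu : WIsReduced G u) {m c : Word G}
    (hmc : WEquiv G u (m ++ c)) (hc : IsCommuting G c) {w w' : Word G}
    (hw : WEquiv G w (m ++ (c ++ m.reverse))) (hstep : AbsorbStep G w w') :
    ∃ m' c', WEquiv G u (m' ++ c') ∧ IsCommuting G c' ∧
      WEquiv G w' (m' ++ (c' ++ m'.reverse)) := by
  obtain ⟨a, b, s, t, hsub, horient, rfl⟩ := hstep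
  have hdep : ¬ LCommute G s t := dep_of_subset hsub
  rcases horient with h1 | h1
  · -- w = a ++ s :: t :: b
    rw [h1] at hw
    obtain ⟨A, M, B, hE, hM0, hdel⟩ := track hdep hw
    have hMs : ∀ y ∈ M, LCommute G s y :=
      fun y hy => (hM0 y hy).elim id (fun h => (depMono hsub h.symm').symm')
    rcases split_occ hE with ⟨δ, hm, hR⟩ | ⟨δ, hA, hR⟩
    · -- s occurs in m
      rcases split_occ hR.symm with ⟨ε, hδ, hB⟩ | ⟨ε, hMe, hR2⟩
      · -- t also in m, after s : contradiction
        exfalso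
        have hv : WEquiv G u (A ++ s :: (M ++ t :: (ε ++ c))) := by
          have h0 := hmc
          rw [hm, hδ] at h0
          simpa [List.append_assoc] using h0
        exact viol1 hu hv hsub hMs
      · rcases split_occ hR2 with ⟨ρ, hce, hB2⟩ | ⟨μ, hεe, hmr⟩
        · -- t in c : contradiction
          exfalso
          have hv : WEquiv G u (A ++ s :: ((δ ++ ε) ++ t :: ρ)) := by
            have h0 := hmc
            rw [hm, hce] at h0
            simpa [List.append_assoc] using h0
          exact viol1 hu hv hsub (by rw [← hMe]; exact hMs)
        · -- t in m.reverse
          have hm2 : m = B.reverse ++ t :: μ.reverse := by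
            have := congrArg List.reverse hmr
            simpa using this
          have hEq : B.reverse ++ (t :: μ.reverse) = A ++ s :: δ := hm2.symm.trans hm
          rcases split_occ hEq with ⟨ρ, hBr, hδe⟩ | ⟨ε₂, hAe, h4⟩
          · -- s occurs before the mirror position : contradiction
            exfalso
            have hv : WEquiv G u (A ++ s :: (ρ ++ t :: (μ.reverse ++ c))) := by
              have h0 := hmc
              rw [hm, hδe] at h0
              simpa [List.append_assoc] using h0
            refine viol1 hu hv hsub ?_
            intro y hy
            exact hMs y (by simp [hMe, hδe, hy])
          · cases ε₂ with
            | cons e ε₂' =>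
              exfalso
              rw [List.cons_append] at h4
              obtain ⟨-, h5⟩ := List.cons.inj h4
              have : s ∈ M := by
                rw [hMe, hεe]
                have : s ∈ μ := by
                  rw [← List.mem_reverse, h5]; simp
                simp [this]
              exact lcommute_irrefl s (hMs s this)
            | nil =>
              obtain ⟨hts, hμδ⟩ := List.cons.inj h4
              have hst2 : s = t := hts.symm
              subst hst2
              rw [List.append_nil] at hAe
              have hμ : μ = δ.reverse := by rw [← hμδ]; simp
              have hB2 : B = A.reverse := by rw [hAe]; simp
              have hδs : ∀ y ∈ δ, LCommute G s y := by
                intro y hy; exact hMs y (by simp [hMe, hy])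
              have hcs : ∀ y ∈ c, LCommute G s y := by
                intro y hy; exact hMs y (by simp [hMe, hεe, hy])
              refine ⟨A ++ δ, s :: c, ?_, List.pairwise_cons.mpr ⟨hcs, hc⟩, ?_⟩
              · have h0 := hmc
                rw [hm] at h0
                refine h0.trans ?_
                have := weq_append_left A (weq_append_right c (weq_move_out hδs))
                simpa [List.append_assoc] using this
              · rw [hMe, hεe, hμ, hB2] at hdel
                refine hdel.trans ?_
                have e2 : WEquiv G (s :: (c ++ δ.reverse)) ((c ++ δ.reverse) ++ [s]) := by
                  refine weq_move_out ?_
                  intro y hy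
                  rcases List.mem_append.mp hy with hy | hy
                  · exact hcs y hy
                  · exact hδs y (List.mem_reverse.mp hy)
                have := weq_append_left (A ++ δ) (weq_append_right A.reverse e2.symm)
                simpa [List.append_assoc] using this
    · -- s occurs in c or m.reverse
      rcases split_occ hR with ⟨ρ, hce, hrest⟩ | ⟨ε₂, hδe, hmr⟩
      · -- s in c
        rcases split_occ hrest.symm with ⟨ε, hρ, hB⟩ | ⟨μ, hMe, hmr⟩
        · -- t in c too : contradiction with commutativity
          exact absurd ((comm_before hc hce).2 t (by simp [hρ])) hdep
        · -- t in m.reverse : contradiction with reducedness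
          exfalso
          have hm2 : m = B.reverse ++ t :: μ.reverse := by
            have := congrArg List.reverse hmr
            simpa using this
          have hv : WEquiv G u (B.reverse ++ t :: ((μ.reverse ++ δ) ++ s :: ρ)) := by
            have h0 := hmc
            rw [hm2, hce] at h0
            simpa [List.append_assoc] using h0
          refine viol2 hu hv hsub ?_
          intro y hy
          rcases List.mem_append.mp hy with hy | hy
          · exact hMs y (by simp [hMe, List.mem_reverse.mp hy])
          · exact (comm_before hc hce).1 y hy
      · -- s in m.reverse : contradiction
        exfalso
        have hm2 : m = B.reverse ++ t :: (M.reverse ++ s :: ε₂.reverse) := by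
          have := congrArg List.reverse hmr
          simpa [List.append_assoc] using this
        have hv : WEquiv G u (B.reverse ++ t :: (M.reverse ++ s :: (ε₂.reverse ++ c))) := by
          have h0 := hmc
          rw [hm2] at h0
          simpa [List.append_assoc] using h0
        refine viol2 hu hv hsub ?_
        intro y hy
        exact hMs y (List.mem_reverse.mp hy)
  · -- w = a ++ t :: s :: b
    rw [h1] at hw
    obtain ⟨A, M, B, hE, hM0, hdel⟩ := track' hdep hw
    have hMs : ∀ y ∈ M, LCommute G s y :=
      fun y hy => (hM0 y hy).elim id (fun h => (depMono hsub h.symm').symm')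
    rcases split_occ hE with ⟨δ, hm, hR⟩ | ⟨δ, hA, hR⟩
    · -- t occurs in m
      rcases split_occ hR.symm with ⟨ε, hδ, hB⟩ | ⟨ε, hMe, hR2⟩
      · -- s also in m, after t : contradiction
        exfalso
        have hv : WEquiv G u (A ++ t :: (M ++ s :: (ε ++ c))) := by
          have h0 := hmc
          rw [hm, hδ] at h0
          simpa [List.append_assoc] using h0
        exact viol2 hu hv hsub hMs
      · rcases split_occ hR2 with ⟨ρ, hce, hB2⟩ | ⟨ν, hεe, hmr⟩
        · -- s in c : contradiction
          exfalso
          have hv : WEquiv G u (A ++ t :: ((δ ++ ε) ++ s :: ρ)) := by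
            have h0 := hmc
            rw [hm, hce] at h0
            simpa [List.append_assoc] using h0
          exact viol2 hu hv hsub (by rw [← hMe]; exact hMs)
        · -- s in m.reverse
          have hm2 : m = B.reverse ++ s :: ν.reverse := by
            have := congrArg List.reverse hmr
            simpa using this
          have hEq : B.reverse ++ (s :: ν.reverse) = A ++ t :: δ := hm2.symm.trans hm
          rcases split_occ hEq with ⟨ρ, hBr, hδe⟩ | ⟨ε₂, hAe, h4⟩
          · -- mirrored s occurs after t inside m, i.e. s ∈ δ ⊆ M : contradiction
            exfalso
            exact lcommute_irrefl s (hMs s (by simp [hMe, hδe]))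
          · cases ε₂ with
            | cons e ε₂' =>
              exfalso
              rw [List.cons_append] at h4
              obtain ⟨-, h5⟩ := List.cons.inj h4
              have : t ∈ M := by
                rw [hMe, hεe]
                have : t ∈ ν := by
                  rw [← List.mem_reverse, h5]; simp
                simp [this]
              exact hdep (hMs t this)
            | nil =>
              obtain ⟨hts, hνδ⟩ := List.cons.inj h4
              subst hts
              rw [List.append_nil] at hAe
              have hν : ν = δ.reverse := by rw [← hνδ]; simp
              have hB2 : B = A.reverse := by rw [hAe]; simp
              have hδs : ∀ y ∈ δ, LCommute G s y := by
                intro y hy; exact hMs y (by simp [hMe, hy])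
              have hcs : ∀ y ∈ c, LCommute G s y := by
                intro y hy; exact hMs y (by simp [hMe, hεe, hy])
              refine ⟨A ++ δ, s :: c, ?_, List.pairwise_cons.mpr ⟨hcs, hc⟩, ?_⟩
              · have h0 := hmc
                rw [hm] at h0
                refine h0.trans ?_
                have := weq_append_left A (weq_append_right c (weq_move_out hδs))
                simpa [List.append_assoc] using this
              · rw [hMe, hεe, hν, hB2] at hdel
                refine hdel.trans ?_
                have := weq_append_left A
                  (weq_append_right (c ++ (δ.reverse ++ A.reverse)) (weq_move_out hδs))
                simpa [List.append_assoc] using this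
    · -- t occurs in c or m.reverse
      rcases split_occ hR with ⟨ρ, hce, hrest⟩ | ⟨ε₂, hδe, hmr⟩
      · -- t in c
        rcases split_occ hrest.symm with ⟨ε, hρ, hB⟩ | ⟨ν, hMe, hmr⟩
        · -- s in c too : contradiction
          exact absurd ((comm_before hc hce).2 s (by simp [hρ])).symm' hdep
        · -- s in m.reverse while t in c : contradiction
          exfalso
          have hm2 : m = B.reverse ++ s :: ν.reverse := by
            have := congrArg List.reverse hmr
            simpa using this
          have hv : WEquiv G u (B.reverse ++ s :: ((ν.reverse ++ δ) ++ t :: ρ)) := by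
            have h0 := hmc
            rw [hm2, hce] at h0
            simpa [List.append_assoc] using h0
          refine viol1 hu hv hsub ?_
          intro y hy
          rcases List.mem_append.mp hy with hy | hy
          · exact hMs y (by simp [hMe, List.mem_reverse.mp hy])
          · exact ((depMono hsub ((comm_before hc hce).1 y hy).symm').symm')
      · -- t in m.reverse (s also) : contradiction
        exfalso
        have hm2 : m = B.reverse ++ s :: (M.reverse ++ t :: ε₂.reverse) := by
          have := congrArg List.reverse hmr
          simpa [List.append_assoc] using this
        have hv : WEquiv G u (B.reverse ++ s :: (M.reverse ++ t :: (ε₂.reverse ++ c))) := by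
          have h0 := hmc
          rw [hm2] at h0
          simpa [List.append_assoc] using h0
        refine viol1 hu hv hsub ?_
        intro y hy
        exact hMs y (List.mem_reverse.mp hy)

end Absorb
/-- If `u` is reduced and `u ≈ u₁·ũ` where `ũ` is the final segment of `u`,
then `[u·u⁻¹] ≈ u₁·ũ·u₁⁻¹`. -/
theorem reduct_self_inverse (G : SimpleGraph V) (u u1 t : Word G)
    (hu : WIsReduced G u) (hdec : WEquiv G u (u1 ++ t))
    (hfin : IsFinalSegment G t u) :
    ∀ r, NSRed G (u ++ u.reverse) r → WEquiv G r (u1 ++ t ++ u1.reverse) := by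
  intro r hr
  obtain ⟨hchain, hred⟩ := hr
  have key : ∃ m c, WEquiv G u (m ++ c) ∧ IsCommuting G c ∧
      WEquiv G r (m ++ (c ++ m.reverse)) := by
    clear hred hdec hfin
    induction hchain with
    | refl =>
      refine ⟨u, [], by simpa using WEquiv.refl (G := G) u, List.Pairwise.nil, ?_⟩
      simpa using WEquiv.refl (G := G) (u ++ u.reverse)
    | tail _ hstep ih =>
      obtain ⟨m, c, h1, h2, h3⟩ := ih
      rcases hstep with hsw | hab
      · exact ⟨m, c, h1, h2, (Relation.ReflTransGen.single hsw.symm).trans h3⟩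
      · exact absorb_preserve hu h1 h2 h3 hab
  obtain ⟨m, c, hmc, hcomm, hrw⟩ := key
  have hct : ∀ x : Letter G, x ∈ c ↔ x ∈ t := by
    intro x
    rw [hfin.2 x]
    constructor
    · intro hx
      obtain ⟨c₁, c₂, rfl⟩ := List.append_of_mem hx
      refine ⟨m ++ (c₁ ++ c₂), ?_⟩
      refine hmc.trans ?_
      have := weq_append_left (m ++ c₁) (weq_move_out (comm_before hcomm rfl).2)
      simpa [List.append_assoc] using this
    · rintro ⟨v, hv⟩
      obtain ⟨P, Q, hE, hQ, hdel⟩ := last_track (hv.symm.trans hmc)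
      rcases split_occ hE with ⟨δ, hm, hQe⟩ | ⟨δ, hP, hce⟩
      · exfalso
        have hxq : ∀ y ∈ δ ++ (c ++ δ.reverse), LCommute G x y := by
          intro y hy
          simp only [List.mem_append, List.mem_reverse] at hy
          rcases hy with hy | hy | hy
          · exact hQ y (by simp [hQe, hy])
          · exact hQ y (by simp [hQe, hy])
          · exact hQ y (by simp [hQe, hy])
        have hv2 : WEquiv G r (P ++ x :: ((δ ++ (c ++ δ.reverse)) ++ x :: P.reverse)) := by
          have h0 := hrw
          rw [hm] at h0
          simpa [List.append_assoc] using h0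
        exact viol1 hred hv2 (subset_refl _) hxq
      · rw [hce]; simp
  have hndc : c.Nodup := nodup_of_commuting hcomm
  have hndt : t.Nodup := nodup_of_commuting hfin.1
  have hperm : t.Perm c := (List.perm_ext_iff_of_nodup hndt hndc).mpr (fun a => (hct a).symm)
  have htc : WEquiv G t c := weq_of_perm_comm hperm hfin.1
  have hmu1 : WEquiv G m u1 :=
    cancel_right c ((hmc.symm.trans hdec).trans (weq_append_left u1 htc))
  have hfinal : WEquiv G (m ++ (c ++ m.reverse)) (u1 ++ (t ++ u1.reverse)) :=
    weq_append hmu1 (weq_append htc.symm (weq_reverse hmu1))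
  have := hrw.trans hfinal
  simpa [List.append_assoc] using this
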